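/- Minimization of a linear functional over a chi-squared ball: Let P, Q be positive probability distributions on {1,...,k} with P ≠ Q, α_i = ln(P_i/Q_i), V = V(P‖Q) = Σ_i P_i (α_i − D(P‖Q))², and 0 < √r̃ < √V/τ with τ as defined. Then the minimum of ℓ(Γ) = Σ_{i=1}^k (Γ_i − P_i) α_i over all probability distributions Γ with positive entries satisfying d_{χ²}(Γ,P) ≤ r̃ equals −√(V r̃), attained at Γ*_i = P_i + √r̃ (D(P‖Q) − α_i) P_i / √V. -/

import Mathlib

theorem min_linear_over_chiSq_ball (k : ℕ) (hk : 2 ≤ k)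
    (P Q : Fin k → ℝ)
    (hPpos : ∀ i, 0 < P i) (hPsum : ∑ i, P i = 1)
    (hQpos : ∀ i, 0 < Q i) (hQsum : ∑ i, Q i = 1)
    (hPQ : P ≠ Q)
    (D V τ r : ℝ)
    (hD : D = ∑ i, P i * Real.log (P i / Q i))
    (hV : V = ∑ i, P i * (Real.log (P i / Q i) - D) ^ 2)
    (hτmem : ∃ j, Real.log (P j / Q j) - D = τ ∧ 0 < Real.log (P j / Q j) - D)
    (hτmax : ∀ j, 0 < Real.log (P j / Q j) - D → Real.log (P j / Q j) - D ≤ τ)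
    (hr : 0 < Real.sqrt r) (hrτ : Real.sqrt r < Real.sqrt V / τ)
    (Γstar : Fin k → ℝ)
    (hΓstar : ∀ i, Γstar i = P i + Real.sqrt r * (D - Real.log (P i / Q i)) * P i / Real.sqrt V) :
    ((∀ i, 0 < Γstar i) ∧ (∑ i, Γstar i = 1) ∧ ∑ i, (Γstar i - P i) ^ 2 / P i ≤ r) ∧
    (∑ i, (Γstar i - P i) * Real.log (P i / Q i) = -Real.sqrt (V * r)) ∧
    (∀ Γ : Fin k → ℝ, (∀ i, 0 < Γ i) → (∑ i, Γ i = 1) →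
      (∑ i, (Γ i - P i) ^ 2 / P i ≤ r) →
      -Real.sqrt (V * r) ≤ ∑ i, (Γ i - P i) * Real.log (P i / Q i)) := by
  set a : Fin k → ℝ := fun i => Real.log (P i / Q i) with ha
  set c : Fin k → ℝ := fun i => a i - D with hc
  obtain ⟨j, hj1, hj2⟩ := hτmem
  have hτpos : 0 < τ := hj1 ▸ hj2
  have hrpos : 0 < r := Real.sqrt_pos.mp hr
  have hVpos : 0 < V := by
    rw [hV]
    calc (0:ℝ) < P j * (a j - D) ^ 2 := mul_pos (hPpos j) (pow_pos hj2 2)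
    _ ≤ ∑ i, P i * (a i - D) ^ 2 :=
        Finset.single_le_sum (f := fun i => P i * (a i - D) ^ 2)
          (fun i _ => mul_nonneg (hPpos i).le (sq_nonneg _)) (Finset.mem_univ j)
  set sr : ℝ := Real.sqrt r with hsr
  set sV : ℝ := Real.sqrt V with hsV
  have hsVpos : 0 < sV := Real.sqrt_pos.mpr hVpos
  have hsr2 : sr ^ 2 = r := Real.sq_sqrt hrpos.le
  have hsV2 : sV ^ 2 = V := Real.sq_sqrt hVpos.le
  have hsumPc : ∑ i, P i * c i = 0 := by
    have : ∑ i, P i * c i = (∑ i, P i * a i) - (∑ i, P i) * D := by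
      rw [Finset.sum_mul]
      rw [← Finset.sum_sub_distrib]
      apply Finset.sum_congr rfl
      intro i _; simp [hc]; ring
    rw [this, hPsum, ← hD]; ring
  have hsumPc2 : ∑ i, P i * c i ^ 2 = V := by rw [hV]
  have hΓ' : ∀ i, Γstar i - P i = -(sr * c i * P i / sV) := by
    intro i; rw [hΓstar i]; simp only [hc, ha]; ring
  have hsrτ : sr * τ < sV := (lt_div_iff₀ hτpos).mp hrτ
  -- positivity
  have hpos : ∀ i, 0 < Γstar i := by
    intro i
    have hlt : sr * c i < sV := by
      rcases le_or_gt (c i) 0 with h | h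
      · calc sr * c i ≤ 0 := mul_nonpos_of_nonneg_of_nonpos hr.le h
        _ < sV := hsVpos
      · calc sr * c i ≤ sr * τ := by
              exact mul_le_mul_of_nonneg_left (hτmax i h) hr.le
        _ < sV := hsrτ
    have : Γstar i = P i * (1 - sr * c i / sV) := by
      rw [hΓstar i]; simp only [hc, ha]; field_simp; ring
    rw [this]
    apply mul_pos (hPpos i)
    have : sr * c i / sV < 1 := (div_lt_one hsVpos).mpr hlt
    linarith
  -- sum = 1
  have hsum_diff : ∑ i, (Γstar i - P i) = 0 := by
    calc ∑ i, (Γstar i - P i) = ∑ i, (-(sr / sV)) * (P i * c i) := by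
          apply Finset.sum_congr rfl; intro i _; rw [hΓ' i]; ring
    _ = (-(sr / sV)) * ∑ i, P i * c i := by rw [Finset.mul_sum]
    _ = 0 := by rw [hsumPc]; ring
  have hsum1 : ∑ i, Γstar i = 1 := by
    have : ∑ i, Γstar i = ∑ i, (Γstar i - P i) + ∑ i, P i := by
      rw [← Finset.sum_add_distrib]; apply Finset.sum_congr rfl; intro i _; ring
    rw [this, hsum_diff, hPsum]; ring
  -- chi-square
  have hchi : ∑ i, (Γstar i - P i) ^ 2 / P i = r := by
    have heq : ∀ i, (Γstar i - P i) ^ 2 / P i = (sr ^ 2 / sV ^ 2) * (P i * c i ^ 2) := by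
      intro i
      rw [hΓ' i]
      have hPi : P i ≠ 0 := (hPpos i).ne'
      have hsVne : sV ≠ 0 := hsVpos.ne'
      field_simp
    calc ∑ i, (Γstar i - P i) ^ 2 / P i = ∑ i, (sr ^ 2 / sV ^ 2) * (P i * c i ^ 2) :=
          Finset.sum_congr rfl (fun i _ => heq i)
    _ = (sr ^ 2 / sV ^ 2) * ∑ i, P i * c i ^ 2 := by rw [Finset.mul_sum]
    _ = r := by rw [hsumPc2, hsr2, hsV2]; field_simp
  -- sqrt (V * r)
  have hsqrtVr : Real.sqrt (V * r) = sV * sr := Real.sqrt_mul hVpos.le r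
  -- objective at Γstar
  have hobj : ∑ i, (Γstar i - P i) * a i = -Real.sqrt (V * r) := by
    have heq : ∀ i, (Γstar i - P i) * a i
        = (-(sr / sV)) * (P i * c i ^ 2) + (-(sr / sV) * D) * (P i * c i) := by
      intro i
      rw [hΓ' i]
      have : a i = c i + D := by simp [hc]
      rw [this]; ring
    calc ∑ i, (Γstar i - P i) * a i
        = ∑ i, ((-(sr / sV)) * (P i * c i ^ 2) + (-(sr / sV) * D) * (P i * c i)) :=
          Finset.sum_congr rfl (fun i _ => heq i)
    _ = (-(sr / sV)) * (∑ i, P i * c i ^ 2) + (-(sr / sV) * D) * (∑ i, P i * c i) := by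
          rw [Finset.sum_add_distrib, Finset.mul_sum, Finset.mul_sum]
    _ = (-(sr / sV)) * V := by rw [hsumPc2, hsumPc]; ring
    _ = -Real.sqrt (V * r) := by
          rw [hsqrtVr, ← hsV2]
          field_simp
  refine ⟨⟨hpos, hsum1, le_of_eq hchi⟩, hobj, ?_⟩
  -- lower bound for general Γ
  intro Γ hΓpos hΓsum hΓchi
  set S : ℝ := ∑ i, (Γ i - P i) * c i with hS
  have hobjΓ : ∑ i, (Γ i - P i) * a i = S := by
    have heq : ∀ i, (Γ i - P i) * a i = (Γ i - P i) * c i + D * (Γ i - P i) := by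
      intro i
      have : a i = c i + D := by simp [hc]
      rw [this]; ring
    have hd0 : ∑ i, (Γ i - P i) = 0 := by
      rw [Finset.sum_sub_distrib, hΓsum, hPsum]; ring
    calc ∑ i, (Γ i - P i) * a i
        = ∑ i, ((Γ i - P i) * c i + D * (Γ i - P i)) :=
          Finset.sum_congr rfl (fun i _ => heq i)
    _ = S + D * ∑ i, (Γ i - P i) := by
          rw [Finset.sum_add_distrib, Finset.mul_sum]
    _ = S := by rw [hd0]; ring
  rw [hobjΓ, hsqrtVr]
  -- Cauchy-Schwarz
  have hCS := Finset.sum_mul_sq_le_sq_mul_sq Finset.univ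
      (fun i => (Γ i - P i) / Real.sqrt (P i)) (fun i => Real.sqrt (P i) * c i)
  have hfg : ∀ i, ((Γ i - P i) / Real.sqrt (P i)) * (Real.sqrt (P i) * c i)
      = (Γ i - P i) * c i := by
    intro i
    have hs : Real.sqrt (P i) ≠ 0 := (Real.sqrt_pos.mpr (hPpos i)).ne'
    field_simp
  have hf2 : ∀ i, ((Γ i - P i) / Real.sqrt (P i)) ^ 2 = (Γ i - P i) ^ 2 / P i := by
    intro i
    rw [div_pow, Real.sq_sqrt (hPpos i).le]
  have hg2 : ∀ i, (Real.sqrt (P i) * c i) ^ 2 = P i * c i ^ 2 := by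
    intro i
    rw [mul_pow, Real.sq_sqrt (hPpos i).le]
  rw [Finset.sum_congr rfl (fun i _ => hfg i), Finset.sum_congr rfl (fun i _ => hf2 i),
    Finset.sum_congr rfl (fun i _ => hg2 i), hsumPc2] at hCS
  have hS2 : S ^ 2 ≤ r * V := by
    calc S ^ 2 ≤ (∑ i, (Γ i - P i) ^ 2 / P i) * V := hCS
    _ ≤ r * V := mul_le_mul_of_nonneg_right hΓchi hVpos.le
  have hrV : r * V = (sV * sr) ^ 2 := by rw [mul_pow, hsr2, hsV2]; ring
  nlinarith [sq_nonneg (S + sV * sr), mul_pos hsVpos hr]
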